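/- For signed permutations x, y in the type B weak order that avoid the patterns 2̄13 and 13underlined-2 (i.e., lie in the sublattice T determined by an orientation of the Coxeter diagram), the inversion set of the join x ∨ y equals the union of the inversion sets: I(x ∨ y) = I(x) ∪ I(y). -/

import Mathlib

/-- A signed permutation of `[n]`: a permutation of `ℤ` which is odd and fixes all
integers of absolute value greater than `n`. -/
def IsBPerm (n : ℕ) (w : Equiv.Perm ℤ) : Prop :=
  (∀ i : ℤ, w (-i) = -(w i)) ∧ ∀ i : ℤ, (n : ℤ) < |i| → w i = i

/-- The inversion set of a signed permutation, encoded as pairs `(a, b)` with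
`a < b`, `0 ≤ a + b`, `a ≠ 0`, `|a|, |b| ≤ n`: the pair `(i, j)` with `0 < i < j`
encodes the positive root `e_j - e_i`, the pair `(-i, j)` with `0 < i < j` encodes
`e_j + e_i`, and the pair `(-i, i)` encodes `e_i`. Such a root is an inversion of
`w` exactly when `w⁻¹ b < w⁻¹ a`, i.e. `b` precedes `a` in one-line notation. -/
def BInversions (n : ℕ) (w : Equiv.Perm ℤ) : Set (ℤ × ℤ) :=
  {p : ℤ × ℤ | p.1 < p.2 ∧ 0 ≤ p.1 + p.2 ∧ p.1 ≠ 0 ∧ |p.1| ≤ (n : ℤ) ∧ |p.2| ≤ (n : ℤ) ∧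
    w.symm p.2 < w.symm p.1}

/-- `w` lies in the sublattice `T`: it avoids the pattern `2̄13` (no positions
`a < b < c` with `w b < w a < w c` and `w a ∈ U`) and the pattern `13<u>2</u>`
(no positions `a < b < c` with `w a < w c < w b` and `w c ∈ D`). -/
def InT (n : ℕ) (U D : Set ℤ) (w : Equiv.Perm ℤ) : Prop :=
  (¬ ∃ a b c : ℤ, a < b ∧ b < c ∧ a ≠ 0 ∧ b ≠ 0 ∧ c ≠ 0 ∧
      |a| ≤ (n : ℤ) ∧ |b| ≤ (n : ℤ) ∧ |c| ≤ (n : ℤ) ∧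
      w b < w a ∧ w a < w c ∧ w a ∈ U) ∧
  (¬ ∃ a b c : ℤ, a < b ∧ b < c ∧ a ≠ 0 ∧ b ≠ 0 ∧ c ≠ 0 ∧
      |a| ≤ (n : ℤ) ∧ |b| ≤ (n : ℤ) ∧ |c| ≤ (n : ℤ) ∧
      w a < w c ∧ w c < w b ∧ w c ∈ D)

namespace BJoinAux

/-- `a` precedes `b` in the one-line notation of `w`. -/
abbrev prec (w : Equiv.Perm ℤ) (a b : ℤ) : Prop := w.symm a < w.symm b

lemma prec_or (w : Equiv.Perm ℤ) {a b : ℤ} (h : a ≠ b) : prec w a b ∨ prec w b a :=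
  lt_or_gt_of_ne (fun hh => h (w.symm.injective hh))

lemma apply_zero {n : ℕ} {w : Equiv.Perm ℤ} (hw : IsBPerm n w) : w 0 = 0 := by
  have h := hw.1 0
  rw [neg_zero] at h
  omega

lemma symm_odd {n : ℕ} {w : Equiv.Perm ℤ} (hw : IsBPerm n w) (i : ℤ) :
    w.symm (-i) = -(w.symm i) := by
  apply w.injective
  rw [Equiv.apply_symm_apply, hw.1, Equiv.apply_symm_apply]

lemma symm_mem {n : ℕ} {w : Equiv.Perm ℤ} (hw : IsBPerm n w) {i : ℤ}
    (h0 : i ≠ 0) (hb : |i| ≤ (n : ℤ)) : w.symm i ≠ 0 ∧ |w.symm i| ≤ (n : ℤ) := by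
  constructor
  · intro h
    apply h0
    have h2 : w (w.symm i) = w 0 := by rw [h]
    rwa [Equiv.apply_symm_apply, apply_zero hw] at h2
  · by_contra hlt
    push_neg at hlt
    have h2 := hw.2 _ hlt
    rw [Equiv.apply_symm_apply] at h2
    rw [← h2] at hlt
    exact absurd hlt (not_lt.mpr hb)

lemma noPat1 {n : ℕ} {U D : Set ℤ} {w : Equiv.Perm ℤ} (hw : IsBPerm n w) (hwT : InT n U D w)
    {u v t : ℤ} (hu0 : u ≠ 0) (huN : |u| ≤ (n : ℤ)) (hv0 : v ≠ 0) (hvN : |v| ≤ (n : ℤ))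
    (ht0 : t ≠ 0) (htN : |t| ≤ (n : ℤ))
    (h1 : prec w u v) (h2 : prec w v t) (hvu : v < u) (hut : u < t) : u ∉ U := by
  intro hU
  obtain ⟨hu0', huN'⟩ := symm_mem hw hu0 huN
  obtain ⟨hv0', hvN'⟩ := symm_mem hw hv0 hvN
  obtain ⟨ht0', htN'⟩ := symm_mem hw ht0 htN
  refine hwT.1 ⟨w.symm u, w.symm v, w.symm t, h1, h2, hu0', hv0', ht0', huN', hvN', htN',
    ?_, ?_, ?_⟩ <;> simp only [Equiv.apply_symm_apply] <;> assumption

lemma noPat2 {n : ℕ} {U D : Set ℤ} {w : Equiv.Perm ℤ} (hw : IsBPerm n w) (hwT : InT n U D w)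
    {u t v : ℤ} (hu0 : u ≠ 0) (huN : |u| ≤ (n : ℤ)) (ht0 : t ≠ 0) (htN : |t| ≤ (n : ℤ))
    (hv0 : v ≠ 0) (hvN : |v| ≤ (n : ℤ))
    (h1 : prec w u t) (h2 : prec w t v) (huv : u < v) (hvt : v < t) : v ∉ D := by
  intro hD
  obtain ⟨hu0', huN'⟩ := symm_mem hw hu0 huN
  obtain ⟨ht0', htN'⟩ := symm_mem hw ht0 htN
  obtain ⟨hv0', hvN'⟩ := symm_mem hw hv0 hvN
  refine hwT.2 ⟨w.symm u, w.symm t, w.symm v, h1, h2, hu0', ht0', hv0', huN', htN', hvN',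
    ?_, ?_, ?_⟩ <;> simp only [Equiv.apply_symm_apply] <;> assumption

/-- The key cross-pattern contradiction: if `p < q < r` naturally, `w` contains the
appearance order `q, p, r` (a `213`-pattern with `q` playing the barred role) and `w'`
contains the appearance order `p, r, q` (a `132`-pattern with `q` playing the underlined
role), then `q ∈ U` and `q ∈ D` are both impossible, contradicting the partition. -/
lemma no_cross {n : ℕ} {U D : Set ℤ}
    (hpart : ∀ i : ℤ, 1 ≤ |i| → |i| ≤ (n : ℤ) - 1 → (i ∈ U ↔ i ∉ D))
    {w w' : Equiv.Perm ℤ} (hw : IsBPerm n w) (hw' : IsBPerm n w')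
    (hwT : InT n U D w) (hw'T : InT n U D w')
    {p q r : ℤ} (hp0 : p ≠ 0) (hpN : |p| ≤ (n : ℤ)) (hq0 : q ≠ 0) (hqN : |q| ≤ (n : ℤ))
    (hr0 : r ≠ 0) (hrN : |r| ≤ (n : ℤ)) (hpq : p < q) (hqr : q < r)
    (h1 : prec w q p) (h2 : prec w p r) (h3 : prec w' p r) (h4 : prec w' r q) : False := by
  have hqU : q ∉ U := noPat1 hw hwT hq0 hqN hp0 hpN hr0 hrN h1 h2 hpq hqr
  have hqD : q ∉ D := noPat2 hw' hw'T hp0 hpN hr0 hrN hq0 hqN h3 h4 hpq hqr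
  have h1q : 1 ≤ |q| := by
    have := abs_pos.mpr hq0
    linarith
  have h2q : |q| ≤ (n : ℤ) - 1 := by
    have hp' := abs_le.mp hpN
    have hr' := abs_le.mp hrN
    rw [abs_le]
    constructor <;> linarith
  exact hqU ((hpart q h1q h2q).mpr hqD)

/-- The combined precedence relation determined by `I(x) ∪ I(y)`. -/
def Prec (x y : Equiv.Perm ℤ) (a b : ℤ) : Prop :=
  (a < b ∧ prec x a b ∧ prec y a b) ∨ (b < a ∧ (prec x a b ∨ prec y a b))

lemma Prec_irrefl {x y : Equiv.Perm ℤ} (a : ℤ) : ¬ Prec x y a a := by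
  rintro (⟨h, -⟩ | ⟨h, -⟩) <;> exact lt_irrefl a h

lemma Prec_asymm {x y : Equiv.Perm ℤ} {a b : ℤ}
    (h1 : Prec x y a b) (h2 : Prec x y b a) : False := by
  rcases h1 with ⟨hab, hx1, hy1⟩ | ⟨hba, hor1⟩
  · rcases h2 with ⟨hba, -, -⟩ | ⟨-, hor2⟩
    · exact lt_asymm hab hba
    · rcases hor2 with h | h
      · exact lt_asymm hx1 h
      · exact lt_asymm hy1 h
  · rcases h2 with ⟨-, hx2, hy2⟩ | ⟨hab, -⟩
    · rcases hor1 with h | h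
      · exact lt_asymm hx2 h
      · exact lt_asymm hy2 h
    · exact lt_asymm hba hab

lemma Prec_total {x y : Equiv.Perm ℤ} {a b : ℤ} (h : a ≠ b) :
    Prec x y a b ∨ Prec x y b a := by
  rcases lt_or_gt_of_ne h with hab | hba
  · by_cases hxab : prec x a b
    · by_cases hyab : prec y a b
      · exact Or.inl (Or.inl ⟨hab, hxab, hyab⟩)
      · refine Or.inr (Or.inr ⟨hab, Or.inr ?_⟩)
        exact (prec_or y h.symm).resolve_right hyab
    · refine Or.inr (Or.inr ⟨hab, Or.inl ?_⟩)
      exact (prec_or x h.symm).resolve_right hxab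
  · by_cases hxba : prec x b a
    · by_cases hyba : prec y b a
      · exact Or.inr (Or.inl ⟨hba, hxba, hyba⟩)
      · refine Or.inl (Or.inr ⟨hba, Or.inr ?_⟩)
        exact (prec_or y h).resolve_right hyba
    · refine Or.inl (Or.inr ⟨hba, Or.inl ?_⟩)
      exact (prec_or x h).resolve_right hxba

lemma prec_neg {n : ℕ} {w : Equiv.Perm ℤ} (hw : IsBPerm n w) {a b : ℤ} :
    prec w (-b) (-a) ↔ prec w a b := by
  unfold prec
  rw [symm_odd hw, symm_odd hw, neg_lt_neg_iff]

lemma Prec_neg {n : ℕ} {x y : Equiv.Perm ℤ} (hx : IsBPerm n x) (hy : IsBPerm n y) {a b : ℤ} :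
    Prec x y (-b) (-a) ↔ Prec x y a b := by
  unfold Prec
  rw [prec_neg hx, prec_neg hy, neg_lt_neg_iff, neg_lt_neg_iff]

/-- Transitivity of the combined precedence relation, via pattern avoidance. -/
lemma Prec_trans {n : ℕ} {U D : Set ℤ}
    (hpart : ∀ i : ℤ, 1 ≤ |i| → |i| ≤ (n : ℤ) - 1 → (i ∈ U ↔ i ∉ D))
    {x y : Equiv.Perm ℤ} (hx : IsBPerm n x) (hy : IsBPerm n y)
    (hxT : InT n U D x) (hyT : InT n U D y)
    {a b c : ℤ} (ha0 : a ≠ 0) (haN : |a| ≤ (n : ℤ)) (hb0 : b ≠ 0) (hbN : |b| ≤ (n : ℤ))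
    (hc0 : c ≠ 0) (hcN : |c| ≤ (n : ℤ))
    (h1 : Prec x y a b) (h2 : Prec x y b c) : Prec x y a c := by
  rcases eq_or_ne a c with rfl | hac
  · exact absurd h2 (fun h2 => Prec_asymm h1 h2)
  rcases h1 with ⟨hab, hxab, hyab⟩ | ⟨hba, hor1⟩
  · rcases h2 with ⟨hbc, hxbc, hybc⟩ | ⟨hcb, hor2⟩
    · -- a < b < c, kept in both
      exact Or.inl ⟨lt_trans hab hbc, lt_trans hxab hxbc, lt_trans hyab hybc⟩
    · -- a < b, c < b
      rcases lt_or_gt_of_ne hac with hac1 | hac2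
      · -- a < c < b
        by_cases hxac : prec x a c
        · by_cases hyac : prec y a c
          · exact Or.inl ⟨hac1, hxac, hyac⟩
          · have hyca : prec y c a := (prec_or y hac.symm).resolve_right hyac
            rcases hor2 with hxbcr | hybcr
            · -- y : c,a,b pattern1 ; x : a,b,c pattern2
              exact absurd (no_cross hpart hy hx hyT hxT ha0 haN hc0 hcN hb0 hbN hac1 hcb
                hyca hyab hxab hxbcr) not_false
            · exact absurd (lt_trans hybcr hyca) (lt_asymm hyab)
        · have hxca : prec x c a := (prec_or x hac.symm).resolve_right hxac
          rcases hor2 with hxbcr | hybcr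
          · exact absurd (lt_trans hxbcr hxca) (lt_asymm hxab)
          · -- x : c,a,b pattern1 ; y : a,b,c pattern2
            exact absurd (no_cross hpart hx hy hxT hyT ha0 haN hc0 hcN hb0 hbN hac1 hcb
              hxca hxab hyab hybcr) not_false
      · -- c < a < b
        refine Or.inr ⟨hac2, ?_⟩
        by_contra hcon
        rw [not_or] at hcon
        have hxca : prec x c a := (prec_or x hac.symm).resolve_right hcon.1
        have hyca : prec y c a := (prec_or y hac.symm).resolve_right hcon.2
        rcases hor2 with hxbcr | hybcr
        · exact lt_asymm hxab (lt_trans hxbcr hxca)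
        · exact lt_asymm hyab (lt_trans hybcr hyca)
  · rcases h2 with ⟨hbc, hxbc, hybc⟩ | ⟨hcb, hor2⟩
    · -- b < a, b < c
      rcases lt_or_gt_of_ne hac with hac1 | hac2
      · -- b < a < c
        by_cases hxac : prec x a c
        · by_cases hyac : prec y a c
          · exact Or.inl ⟨hac1, hxac, hyac⟩
          · have hyca : prec y c a := (prec_or y hac.symm).resolve_right hyac
            rcases hor1 with hxabr | hyabr
            · -- x : a,b,c pattern1 ; y : b,c,a pattern2
              exact absurd (no_cross hpart hx hy hxT hyT hb0 hbN ha0 haN hc0 hcN hba hac1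
                hxabr hxbc hybc hyca) not_false
            · exact absurd (lt_trans hyca hyabr) (lt_asymm hybc)
        · have hxca : prec x c a := (prec_or x hac.symm).resolve_right hxac
          rcases hor1 with hxabr | hyabr
          · exact absurd (lt_trans hxca hxabr) (lt_asymm hxbc)
          · -- y : a,b,c pattern1 ; x : b,c,a pattern2
            exact absurd (no_cross hpart hy hx hyT hxT hb0 hbN ha0 haN hc0 hcN hba hac1
              hyabr hybc hxbc hxca) not_false
      · -- b < c < a
        refine Or.inr ⟨hac2, ?_⟩
        by_contra hcon
        rw [not_or] at hcon
        rcases hor1 with hxabr | hyabr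
        · exact hcon.1 (lt_trans hxabr hxbc)
        · exact hcon.2 (lt_trans hyabr hybc)
    · -- c < b < a
      have hca : c < a := lt_trans hcb hba
      refine Or.inr ⟨hca, ?_⟩
      by_contra hcon
      rw [not_or] at hcon
      have hxca : prec x c a := (prec_or x hac.symm).resolve_right hcon.1
      have hyca : prec y c a := (prec_or y hac.symm).resolve_right hcon.2
      rcases hor1 with hxabr | hyabr
      · rcases hor2 with hxbcr | hybcr
        · exact hcon.1 (lt_trans hxabr hxbcr)
        · -- y : b,c,a pattern1 ; x : c,a,b pattern2
          exact no_cross hpart hy hx hyT hxT hc0 hcN hb0 hbN ha0 haN hcb hba hybcr hyca hxca hxabr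
      · rcases hor2 with hxbcr | hybcr
        · -- x : b,c,a pattern1 ; y : c,a,b pattern2
          exact no_cross hpart hx hy hxT hyT hc0 hcN hb0 hbN ha0 haN hcb hba hxbcr hxca hyca hyabr
        · exact hcon.2 (lt_trans hyabr hybcr)

end BJoinAux

namespace BJoinAux

/-- The finite set `{±1, …, ±n}` as a subtype of `ℤ`. -/
abbrev SB (n : ℕ) := {i : ℤ // i ≠ 0 ∧ |i| ≤ (n : ℤ)}

noncomputable instance instFintypeSB (n : ℕ) : Fintype (SB n) :=
  Fintype.ofInjective
    (fun a : SB n => (⟨a.1, Finset.mem_Icc.mpr (abs_le.mp a.2.2)⟩ :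
      {z : ℤ // z ∈ Finset.Icc (-(n : ℤ)) (n : ℤ)}))
    (fun a b h => Subtype.ext (Subtype.mk_eq_mk.mp h))

/-- Negation on `SB n`. -/
def negSB {n : ℕ} (a : SB n) : SB n :=
  ⟨-a.1, neg_ne_zero.mpr a.2.1, by rw [abs_neg]; exact a.2.2⟩

@[simp] lemma negSB_negSB {n : ℕ} (a : SB n) : negSB (negSB a) = a :=
  Subtype.ext (neg_neg a.1)

/-- A copy of `SB n`, to be ordered by the combined precedence order of `x` and `y`. -/
def PB (n : ℕ) (x y : Equiv.Perm ℤ) : Type := SB n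

noncomputable instance instFintypePB (n : ℕ) (x y : Equiv.Perm ℤ) : Fintype (PB n x y) :=
  instFintypeSB n

lemma card_PB (n : ℕ) (x y : Equiv.Perm ℤ) :
    Fintype.card (PB n x y) = Fintype.card (SB n) := rfl

/-- Identity map into the synonym. -/
def PB.of {n : ℕ} {x y : Equiv.Perm ℤ} (a : SB n) : PB n x y := a

/-- Identity map out of the synonym. -/
def PB.to {n : ℕ} {x y : Equiv.Perm ℤ} (a : PB n x y) : SB n := a

end BJoinAux

open BJoinAux in
theorem inversions_of_join (n : ℕ) (U D : Set ℤ)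
    (hsym : ∀ i : ℤ, i ∈ U ↔ -i ∈ D)
    (hUrange : ∀ i ∈ U, 1 ≤ |i| ∧ |i| ≤ (n : ℤ) - 1)
    (hDrange : ∀ i ∈ D, 1 ≤ |i| ∧ |i| ≤ (n : ℤ) - 1)
    (hpart : ∀ i : ℤ, 1 ≤ |i| → |i| ≤ (n : ℤ) - 1 → (i ∈ U ↔ i ∉ D))
    (x y : Equiv.Perm ℤ) (hx : IsBPerm n x) (hy : IsBPerm n y)
    (hxT : InT n U D x) (hyT : InT n U D y) :
    ∃ z : Equiv.Perm ℤ, IsBPerm n z ∧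
      BInversions n z = BInversions n x ∪ BInversions n y ∧
      ∀ w : Equiv.Perm ℤ, IsBPerm n w →
        BInversions n x ⊆ BInversions n w → BInversions n y ⊆ BInversions n w →
        BInversions n z ⊆ BInversions n w := by
  classical
  -- set up the strict total order `Prec` on the synonym `PB n x y`
  let R : PB n x y → PB n x y → Prop := fun a b => Prec x y (PB.to a).1 (PB.to b).1
  haveI : IsTrichotomous (PB n x y) R := ⟨by
    intro a b hab hba
    rcases eq_or_ne (PB.to a).1 (PB.to b).1 with h | h
    · exact (Subtype.ext h : PB.to a = PB.to b)
    · rcases Prec_total (x := x) (y := y) h with h' | h'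
      · exact absurd h' hab
      · exact absurd h' hba⟩
  haveI : IsIrrefl (PB n x y) R := ⟨fun a => Prec_irrefl _⟩
  haveI : IsTrans (PB n x y) R := ⟨by
    intro a b c hab hbc
    exact Prec_trans hpart hx hy hxT hyT
      (PB.to a).2.1 (PB.to a).2.2 (PB.to b).2.1 (PB.to b).2.2
      (PB.to c).2.1 (PB.to c).2.2 hab hbc⟩
  haveI : IsStrictOrder (PB n x y) R := {}
  haveI : IsStrictTotalOrder (PB n x y) R := {}
  haveI : DecidableRel R := fun a b => Classical.dec _
  letI : LinearOrder (PB n x y) := linearOrderOfSTO R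
  have hlt : ∀ a b : PB n x y, a < b ↔ Prec x y (PB.to a).1 (PB.to b).1 := fun a b => Iff.rfl
  -- the order isomorphism with the naturally ordered copy
  have hcard : Fintype.card (PB n x y) = Fintype.card (SB n) := card_PB n x y
  let ψ : PB n x y ≃o SB n :=
    (monoEquivOfFin (PB n x y) hcard).symm.trans (monoEquivOfFin (SB n) rfl)
  -- a second order isomorphism, obtained by conjugating with negation
  have hPrec_iff : ∀ a b : PB n x y,
      a < b ↔ Prec x y (PB.to a).1 (PB.to b).1 := hlt
  have hmono : StrictMono (fun a : PB n x y => negSB (ψ (PB.of (negSB (PB.to a))))) := by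
    intro a b hab
    have h1 : Prec x y (PB.to a).1 (PB.to b).1 := (hlt a b).mp hab
    have h2 : Prec x y (-(PB.to b).1) (-(PB.to a).1) := (Prec_neg hx hy).mpr h1
    have h3 : (PB.of (negSB (PB.to b)) : PB n x y) < PB.of (negSB (PB.to a)) :=
      (hlt _ _).mpr h2
    have h4 : ψ (PB.of (negSB (PB.to b))) < ψ (PB.of (negSB (PB.to a))) :=
      ψ.lt_iff_lt.mpr h3
    exact Subtype.mk_lt_mk.mpr (neg_lt_neg (Subtype.coe_lt_coe.mpr h4))
  have hsurj : Function.Surjective (fun a : PB n x y => negSB (ψ (PB.of (negSB (PB.to a))))) := by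
    intro b
    refine ⟨PB.of (negSB (PB.to (ψ.symm (negSB b)))), ?_⟩
    show negSB (ψ (PB.of (negSB (PB.to (PB.of (negSB (PB.to (ψ.symm (negSB b)))))))))  = b
    rw [show (PB.to (PB.of (negSB (PB.to (ψ.symm (negSB b))))) : SB n)
        = negSB (PB.to (ψ.symm (negSB b))) from rfl]
    rw [negSB_negSB]
    rw [show (PB.of (PB.to (ψ.symm (negSB b))) : PB n x y) = ψ.symm (negSB b) from rfl]
    rw [OrderIso.apply_symm_apply, negSB_negSB]
  let ψ' : PB n x y ≃o SB n := StrictMono.orderIsoOfSurjective _ hmono hsurj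
  have hψψ' : ψ = ψ' := Subsingleton.elim _ _
  -- hence `ψ` intertwines negation
  have hodd : ∀ a : PB n x y, ψ (PB.of (negSB (PB.to a))) = negSB (ψ a) := by
    intro a
    have h1 : ψ a = ψ' a := by rw [hψψ']
    have h2 : ψ' a = negSB (ψ (PB.of (negSB (PB.to a)))) := rfl
    rw [h1, h2, negSB_negSB]
  -- build the permutation `z` out of `ψ`
  let E : Equiv.Perm (SB n) := (ψ.toEquiv : PB n x y ≃ SB n)
  have hEodd : ∀ a : SB n, E (negSB a) = negSB (E a) := fun a => hodd (PB.of a)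
  let g : Equiv.Perm ℤ := E.extendDomain (Equiv.refl (SB n))
  have hgfix : ∀ i : ℤ, ¬(i ≠ 0 ∧ |i| ≤ (n : ℤ)) → g i = i := fun i h =>
    E.extendDomain_apply_not_subtype _ h
  have hgmem : ∀ (i : ℤ) (h : i ≠ 0 ∧ |i| ≤ (n : ℤ)), g i = (E ⟨i, h⟩).1 := by
    intro i h
    have h2 := E.extendDomain_apply_subtype (Equiv.refl (SB n)) h
    simpa using h2
  have hgodd : ∀ i : ℤ, g (-i) = -(g i) := by
    intro i
    by_cases h : i ≠ 0 ∧ |i| ≤ (n : ℤ)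
    · have h' : -i ≠ 0 ∧ |(-i)| ≤ (n : ℤ) := ⟨neg_ne_zero.mpr h.1, by rw [abs_neg]; exact h.2⟩
      rw [hgmem _ h', hgmem _ h]
      have h3 : (⟨-i, h'⟩ : SB n) = negSB ⟨i, h⟩ := rfl
      rw [h3, hEodd]
      rfl
    · rcases eq_or_ne i 0 with rfl | h0
      · have h00 : g (0 : ℤ) = 0 := hgfix 0 (by simp)
        rw [neg_zero, h00, neg_zero]
      · have hn : (n : ℤ) < |i| := by
          by_contra hc
          exact h ⟨h0, not_lt.mp hc⟩
        have hfix1 : g i = i := hgfix i (fun hh => absurd hn (not_lt.mpr hh.2))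
        have hfix2 : g (-i) = -i := hgfix (-i)
          (fun hh => absurd hn (not_lt.mpr (by rw [← abs_neg]; exact hh.2)))
        rw [hfix1, hfix2]
  have hz : IsBPerm n g.symm := by
    constructor
    · intro i
      apply g.injective
      rw [Equiv.apply_symm_apply, hgodd, Equiv.apply_symm_apply]
    · intro i hi
      have hfix1 : g i = i := hgfix i (fun hh => absurd hi (not_lt.mpr hh.2))
      exact g.injective (by rw [Equiv.apply_symm_apply, hfix1])
  -- comparison of `g` with the combined precedence relation
  have hkey : ∀ (u v : ℤ) (hu : u ≠ 0 ∧ |u| ≤ (n : ℤ)) (hv : v ≠ 0 ∧ |v| ≤ (n : ℤ)),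
      g u < g v ↔ Prec x y u v := by
    intro u v hu hv
    rw [hgmem _ hu, hgmem _ hv]
    have h1 : (E ⟨u, hu⟩ : SB n) < E ⟨v, hv⟩ ↔
        (PB.of ⟨u, hu⟩ : PB n x y) < PB.of ⟨v, hv⟩ :=
      ψ.lt_iff_lt
    rw [Subtype.coe_lt_coe, h1]
    exact hlt _ _
  -- the inversion-set identity
  have heq : BInversions n g.symm = BInversions n x ∪ BInversions n y := by
    ext p
    obtain ⟨a, b⟩ := p
    simp only [BInversions, Set.mem_union, Set.mem_setOf_eq, Equiv.symm_symm]
    constructor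
    · rintro ⟨h1, h2, h3, h4, h5, h6⟩
      have hb0 : b ≠ 0 := by rintro rfl; omega
      have hP : Prec x y b a := (hkey b a ⟨hb0, h5⟩ ⟨h3, h4⟩).mp h6
      rcases hP with ⟨hba, -⟩ | ⟨-, hor⟩
      · exact absurd h1 (lt_asymm hba)
      · rcases hor with h | h
        · exact Or.inl ⟨h1, h2, h3, h4, h5, h⟩
        · exact Or.inr ⟨h1, h2, h3, h4, h5, h⟩
    · rintro (⟨h1, h2, h3, h4, h5, h6⟩ | ⟨h1, h2, h3, h4, h5, h6⟩) <;>
      · have hb0 : b ≠ 0 := by rintro rfl; omega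
        refine ⟨h1, h2, h3, h4, h5, (hkey b a ⟨hb0, h5⟩ ⟨h3, h4⟩).mpr ?_⟩
        first
          | exact Or.inr ⟨h1, Or.inl h6⟩
          | exact Or.inr ⟨h1, Or.inr h6⟩
  exact ⟨g.symm, hz, heq, fun w _ hxw hyw => heq ▸ Set.union_subset hxw hyw⟩
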